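/- Let p ≥ 2, let f : ℝ^d → ℝ be convex, differentiable, and L-smooth w.r.t. ‖·‖_p with minimizer x*, and let (x_t) be HASD iterates started at x_0 with ‖x_0 − x*‖_2 ≤ R. Let ε > 0, suppose Ĝ satisfies 1 ≤ Ĝ ≤ (1/T) ∑_{t=0}^{T-1} ‖∇f(x_{t+1})‖_{p*}/‖∇f(x_{t+1})‖_2 where T = ⌈18√2 · L R/(Ĝ ε)⌉. Then ‖∇f(x_T)‖_{p*} ≤ ε. -/

import Mathlib

open scoped BigOperators
open scoped InnerProductSpace

/-- The `ℓ_p` "norm" on `ℝ^d` for a real exponent `p`. -/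
noncomputable def pnorm (p : ℝ) {d : ℕ} (x : EuclideanSpace ℝ (Fin d)) : ℝ :=
  (∑ i, |x i| ^ p) ^ (1 / p)

/-- The dual exponent `p* = p/(p-1)`, so that `1/p + 1/p* = 1`. -/
noncomputable def dualExp (p : ℝ) : ℝ := p / (p - 1)

/-- The iterates of the Hyper-Accelerated Steepest Descent (HASD) method for
`f : ℝ^d → ℝ` differentiable, smoothness constant `L > 0`, started at `x0`. -/
structure HASD (d : ℕ) (p L : ℝ) (f : EuclideanSpace ℝ (Fin d) → ℝ)
    (x0 : EuclideanSpace ℝ (Fin d)) where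
  x : ℕ → EuclideanSpace ℝ (Fin d)
  y : ℕ → EuclideanSpace ℝ (Fin d)
  v : ℕ → EuclideanSpace ℝ (Fin d)
  a : ℕ → ℝ
  A : ℕ → ℝ
  ρ : ℕ → ℝ
  ψ : ℕ → EuclideanSpace ℝ (Fin d) → ℝ
  x_zero : x 0 = x0
  A_zero : A 0 = 0
  ψ_zero : ∀ z, ψ 0 z = (1 / 2) * pnorm 2 (z - x0) ^ 2
  /-- `v t` minimizes `ψ t` over `ℝ^d`. -/
  v_min : ∀ t z, ψ t (v t) ≤ ψ t z
  grad_ne : ∀ t : ℕ, gradient f (x (t + 1)) ≠ 0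
  ρ_pos : ∀ t : ℕ, 0 < ρ t
  ρ_lb : ∀ t : ℕ, (1 / 2) * (pnorm 2 (gradient f (x (t + 1))) ^ 2 /
      pnorm (dualExp p) (gradient f (x (t + 1))) ^ 2) ≤ ρ t
  ρ_ub : ∀ t : ℕ, ρ t ≤ 2 * (pnorm 2 (gradient f (x (t + 1))) ^ 2 /
      pnorm (dualExp p) (gradient f (x (t + 1))) ^ 2)
  a_pos : ∀ t : ℕ, 0 < a (t + 1)
  a_eq : ∀ t : ℕ, a (t + 1) ^ 2 = (A t + a (t + 1)) / (18 * L * ρ t)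
  A_succ : ∀ t : ℕ, A (t + 1) = A t + a (t + 1)
  y_def : ∀ t : ℕ, y t = (1 - a (t + 1) / A (t + 1)) • x t + (a (t + 1) / A (t + 1)) • v t
  /-- `x (t+1)` minimizes `z ↦ ⟪∇f(y t), z - y t⟫ + L ‖z - y t‖_p²` over `ℝ^d`. -/
  x_min : ∀ (t : ℕ) (z : EuclideanSpace ℝ (Fin d)),
      ⟪gradient f (y t), x (t + 1) - y t⟫_ℝ + L * pnorm p (x (t + 1) - y t) ^ 2 ≤
      ⟪gradient f (y t), z - y t⟫_ℝ + L * pnorm p (z - y t) ^ 2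
  ψ_succ : ∀ (t : ℕ) (z : EuclideanSpace ℝ (Fin d)),
      ψ (t + 1) z = ψ t z + a (t + 1) * (f (x (t + 1)) + ⟪gradient f (x (t + 1)), z - x (t + 1)⟫_ℝ)

lemma pnorm_nonneg (q : ℝ) {d : ℕ} (x : EuclideanSpace ℝ (Fin d)) : 0 ≤ pnorm q x := by
  apply Real.rpow_nonneg
  positivity

lemma pnorm_zero {q : ℝ} (hq : 0 < q) {d : ℕ} : pnorm q (0 : EuclideanSpace ℝ (Fin d)) = 0 := by
  unfold pnorm
  have : ∀ i : Fin d, |(0 : EuclideanSpace ℝ (Fin d)) i| ^ q = 0 := by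
    intro i
    simp [Real.zero_rpow hq.ne']
  rw [Finset.sum_congr rfl (fun i _ => this i)]
  rw [Finset.sum_const, smul_zero, Real.zero_rpow (by positivity : (1/q : ℝ) ≠ 0)]

lemma pnorm_pos {q : ℝ} (hq : 0 < q) {d : ℕ} {x : EuclideanSpace ℝ (Fin d)} (hx : x ≠ 0) :
    0 < pnorm q x := by
  unfold pnorm
  have hxne : ∃ i, x i ≠ 0 := by
    by_contra hc
    push_neg at hc
    exact hx (by ext i; simpa using hc i)
  obtain ⟨i, hi⟩ := hxne
  have hsum : 0 < ∑ j, |x j| ^ q := by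
    apply Finset.sum_pos' (fun j _ => by positivity)
    exact ⟨i, Finset.mem_univ i, by positivity⟩
  positivity

lemma pnorm_two_eq_norm {d : ℕ} (x : EuclideanSpace ℝ (Fin d)) : pnorm 2 x = ‖x‖ := by
  rw [EuclideanSpace.norm_eq]
  unfold pnorm
  rw [Real.sqrt_eq_rpow]
  congr 1
  · apply Finset.sum_congr rfl
    intro i _
    rw [Real.norm_eq_abs, Real.rpow_two]

lemma pnorm_neg {q : ℝ} {d : ℕ} (x : EuclideanSpace ℝ (Fin d)) : pnorm q (-x) = pnorm q x := by
  unfold pnorm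
  congr 1
  apply Finset.sum_congr rfl
  intro i _
  simp

lemma pnorm_smul {q : ℝ} (hq : 0 < q) {d : ℕ} (c : ℝ) (x : EuclideanSpace ℝ (Fin d)) :
    pnorm q (c • x) = |c| * pnorm q x := by
  unfold pnorm
  have h1 : ∀ i : Fin d, |(c • x) i| ^ q = |c| ^ q * |x i| ^ q := by
    intro i
    rw [PiLp.smul_apply, smul_eq_mul, abs_mul, Real.mul_rpow (abs_nonneg _) (abs_nonneg _)]
  rw [Finset.sum_congr rfl (fun i _ => h1 i), ← Finset.mul_sum,
    Real.mul_rpow (by positivity) (by positivity), ← Real.rpow_mul (abs_nonneg c),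
    mul_one_div_cancel hq.ne', Real.rpow_one]

lemma dualExp_conj {p : ℝ} (hp : 2 ≤ p) : p.HolderConjugate (dualExp p) :=
  Real.HolderConjugate.conjExponent (by linarith)

lemma pnorm_holder {p q : ℝ} (hpq : p.HolderConjugate q) {d : ℕ}
    (u v : EuclideanSpace ℝ (Fin d)) : ⟪u, v⟫_ℝ ≤ pnorm p u * pnorm q v := by
  have h := Real.inner_le_Lp_mul_Lq Finset.univ (fun i => u i) (fun i => v i) hpq
  have hi : ⟪u, v⟫_ℝ = ∑ i, u i * v i := by
    simp [PiLp.inner_apply, RCLike.inner_apply, conj_trivial, mul_comm]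
  rw [hi]
  exact h

lemma pnorm_holder_abs {p q : ℝ} (hpq : p.HolderConjugate q) {d : ℕ}
    (u v : EuclideanSpace ℝ (Fin d)) : |⟪u, v⟫_ℝ| ≤ pnorm p u * pnorm q v := by
  rcases abs_cases (⟪u, v⟫_ℝ) with ⟨h, _⟩ | ⟨h, _⟩ <;> rw [h]
  · exact pnorm_holder hpq u v
  · calc -⟪u, v⟫_ℝ = ⟪u, -v⟫_ℝ := by rw [inner_neg_right]
    _ ≤ pnorm p u * pnorm q (-v) := pnorm_holder hpq u (-v)
    _ = pnorm p u * pnorm q v := by rw [pnorm_neg]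

lemma pnorm_triangle {q : ℝ} (hq : 1 ≤ q) {d : ℕ} (x y : EuclideanSpace ℝ (Fin d)) :
    pnorm q (x + y) ≤ pnorm q x + pnorm q y := by
  have h := Real.Lp_add_le Finset.univ (fun i => x i) (fun i => y i) hq
  unfold pnorm
  have : ∀ i : Fin d, |(x + y) i| ^ q = |x i + y i| ^ q := by
    intro i; rw [PiLp.add_apply]
  rw [Finset.sum_congr rfl (fun i _ => this i)]
  exact h

lemma exists_norming {p q : ℝ} (hpq : p.HolderConjugate q) {d : ℕ}
    {g : EuclideanSpace ℝ (Fin d)} (hg : g ≠ 0) :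
    ∃ w : EuclideanSpace ℝ (Fin d), pnorm p w = 1 ∧ ⟪g, w⟫_ℝ = pnorm q g := by
  have hq1 : 1 < q := hpq.symm.lt
  have hq0 : (0:ℝ) < q := by linarith
  have hp0 : (0:ℝ) < p := hpq.pos
  set N : ℝ := pnorm q g with hN
  have hNpos : 0 < N := pnorm_pos hq0 hg
  set w : EuclideanSpace ℝ (Fin d) := WithLp.toLp 2 (fun i => Real.sign (g i) * |g i| ^ (q - 1) / N ^ (q - 1))
    with hw
  have habs : ∀ i, |w i| = |g i| ^ (q - 1) / N ^ (q - 1) := by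
    intro i
    rw [hw, PiLp.toLp_apply]
    rcases lt_trichotomy (g i) 0 with h | h | h
    · rw [abs_div, abs_mul, Real.sign_of_neg h, abs_of_pos (Real.rpow_pos_of_pos hNpos _),
        abs_of_nonneg (Real.rpow_nonneg (abs_nonneg _) _)]
      norm_num
    · simp [h, Real.zero_rpow (by linarith : q - 1 ≠ 0)]
    · rw [abs_div, abs_mul, Real.sign_of_pos h, abs_of_pos (Real.rpow_pos_of_pos hNpos _),
        abs_of_nonneg (Real.rpow_nonneg (abs_nonneg _) _)]
      norm_num
  have hS : (0:ℝ) ≤ ∑ i, |g i| ^ q := by positivity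
  have hNq : N ^ q = ∑ i, |g i| ^ q := by
    rw [hN]
    unfold pnorm
    rw [one_div, Real.rpow_inv_rpow hS hq0.ne']
  have hq1p : (q - 1) * p = q := by
    have h1 : p⁻¹ + q⁻¹ = 1 := hpq.inv_add_inv_eq_one
    field_simp at h1 ⊢
    nlinarith [h1]
  refine ⟨w, ?_, ?_⟩
  · unfold pnorm
    have h2 : ∀ i : Fin d, |w i| ^ p = |g i| ^ q / N ^ q := by
      intro i
      rw [habs i, Real.div_rpow (Real.rpow_nonneg (abs_nonneg _) _)
        (Real.rpow_nonneg hNpos.le _), ← Real.rpow_mul (abs_nonneg _),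
        ← Real.rpow_mul hNpos.le, hq1p]
    rw [Finset.sum_congr rfl (fun i _ => h2 i), ← Finset.sum_div, ← hNq,
      div_self (by positivity : N ^ q ≠ 0), Real.one_rpow]
  · have h3 : ∀ i : Fin d, g i * w i = |g i| ^ q / N ^ (q - 1) := by
      intro i
      rw [hw]
      show g i * (Real.sign (g i) * |g i| ^ (q - 1) / N ^ (q - 1)) = _
      rw [mul_div_assoc']
      congr 1
      rw [← mul_assoc, mul_comm (g i)]
      have hsg : Real.sign (g i) * g i = |g i| := by
        rcases lt_trichotomy (g i) 0 with h | h | h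
        · rw [Real.sign_of_neg h, abs_of_neg h]; ring
        · simp [h]
        · rw [Real.sign_of_pos h, abs_of_pos h]; ring
      rw [hsg, ← Real.rpow_one_add' (abs_nonneg _) (by linarith : 1 + (q - 1) ≠ 0)]
      ring_nf
    have hinner : ⟪g, w⟫_ℝ = ∑ i, g i * w i := by
      simp [PiLp.inner_apply, RCLike.inner_apply, conj_trivial, mul_comm]
    rw [hinner, Finset.sum_congr rfl (fun i _ => h3 i), ← Finset.sum_div, ← hNq]
    rw [← Real.rpow_sub hNpos]
    norm_num

lemma inner_gradient_eq {d : ℕ} {f : EuclideanSpace ℝ (Fin d) → ℝ} (z u : EuclideanSpace ℝ (Fin d)) :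
    ⟪gradient f z, u⟫_ℝ = fderiv ℝ f z u := by
  rw [gradient]
  exact InnerProductSpace.toDual_symm_apply

lemma hasDerivAt_line {d : ℕ} {f : EuclideanSpace ℝ (Fin d) → ℝ} (hf : Differentiable ℝ f)
    (y u : EuclideanSpace ℝ (Fin d)) (t : ℝ) :
    HasDerivAt (fun s : ℝ => f (y + s • u)) ⟪gradient f (y + t • u), u⟫_ℝ t := by
  have h2 : HasDerivAt (fun s : ℝ => y + s • u) u t := by
    simpa using ((hasDerivAt_id t).smul_const u).const_add y
  have h1 := (hf (y + t • u)).hasFDerivAt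
  have h3 := h1.comp_hasDerivAt t h2
  rw [inner_gradient_eq]
  exact h3

/-- Descent-type upper bound with constant `L` (no 1/2 needed). -/
lemma descent_lemma {d : ℕ} {p L : ℝ} (hp : 2 ≤ p) (hL : 0 < L)
    {f : EuclideanSpace ℝ (Fin d) → ℝ} (hf : Differentiable ℝ f)
    (hsmooth : ∀ x y : EuclideanSpace ℝ (Fin d),
      pnorm (dualExp p) (gradient f y - gradient f x) ≤ L * pnorm p (y - x))
    (y z : EuclideanSpace ℝ (Fin d)) :
    f z ≤ f y + ⟪gradient f y, z - y⟫_ℝ + L * pnorm p (z - y) ^ 2 := by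
  set u := z - y with hu
  have hcont : ContinuousOn (fun s : ℝ => f (y + s • u)) (Set.Icc 0 1) :=
    (hf.continuous.comp (by continuity)).continuousOn
  obtain ⟨c, hc, hceq⟩ := exists_hasDerivAt_eq_slope (fun s : ℝ => f (y + s • u))
    (fun s => ⟪gradient f (y + s • u), u⟫_ℝ) one_pos hcont
    (fun s _ => hasDerivAt_line hf y u s)
  have hz : y + (1:ℝ) • u = z := by rw [hu]; simp
  have hy0 : y + (0:ℝ) • u = y := by simp
  rw [hz, hy0] at hceq
  simp only [div_one, sub_zero] at hceq
  -- f z - f y = ⟪∇f(y+c•u), u⟫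
  have hsplit : ⟪gradient f (y + c • u), u⟫_ℝ
      = ⟪gradient f y, u⟫_ℝ + ⟪gradient f (y + c • u) - gradient f y, u⟫_ℝ := by
    rw [inner_sub_left]; ring
  have hq := (dualExp_conj hp).symm
  have hhold := pnorm_holder hq (gradient f (y + c • u) - gradient f y) u
  have hsm := hsmooth y (y + c • u)
  have hyc : y + c • u - y = c • u := by abel
  rw [hyc, pnorm_smul (by linarith : (0:ℝ) < p), abs_of_pos hc.1] at hsm
  have hc1 : c ≤ 1 := hc.2.le
  have hpu : 0 ≤ pnorm p u := pnorm_nonneg p u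
  have : f z - f y ≤ ⟪gradient f y, u⟫_ℝ + L * pnorm p u ^ 2 := by
    rw [← hceq, hsplit]
    have h5 : ⟪gradient f (y + c • u) - gradient f y, u⟫_ℝ ≤ L * pnorm p u ^ 2 := by
      calc ⟪gradient f (y + c • u) - gradient f y, u⟫_ℝ
          ≤ pnorm (dualExp p) (gradient f (y + c • u) - gradient f y) * pnorm p u := hhold
        _ ≤ (L * (c * pnorm p u)) * pnorm p u := by
            apply mul_le_mul_of_nonneg_right hsm hpu
        _ ≤ L * pnorm p u ^ 2 := by nlinarith [mul_nonneg (mul_nonneg (mul_nonneg hL.le hpu) hpu) (sub_nonneg.2 hc1)]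
    linarith
  linarith

/-- Gradient inequality for convex differentiable functions. -/
lemma convex_grad_ineq {d : ℕ} {f : EuclideanSpace ℝ (Fin d) → ℝ}
    (hconv : ConvexOn ℝ Set.univ f) (hf : Differentiable ℝ f)
    (x z : EuclideanSpace ℝ (Fin d)) :
    f x + ⟪gradient f x, z - x⟫_ℝ ≤ f z := by
  set u := z - x with hu
  set φ : ℝ → ℝ := fun s => f (x + s • u) with hφ
  have hφconv : ConvexOn ℝ Set.univ φ := by
    have haff : ConvexOn ℝ ((AffineMap.lineMap x z : ℝ →ᵃ[ℝ] EuclideanSpace ℝ (Fin d)) ⁻¹' Set.univ)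
        (f ∘ (AffineMap.lineMap x z : ℝ →ᵃ[ℝ] EuclideanSpace ℝ (Fin d))) :=
      hconv.comp_affineMap _
    have : φ = f ∘ (AffineMap.lineMap x z : ℝ →ᵃ[ℝ] EuclideanSpace ℝ (Fin d)) := by
      funext s
      simp [hφ, AffineMap.lineMap_apply, hu]
      rw [add_comm]
    rw [this]
    simpa using haff
  have hder : HasDerivAt φ ⟪gradient f (x + (0:ℝ) • u), u⟫_ℝ 0 := hasDerivAt_line hf x u 0
  have hslope := hφconv.le_slope_of_hasDerivAt (Set.mem_univ (0:ℝ)) (Set.mem_univ (1:ℝ))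
    one_pos hder
  have h0 : φ 0 = f x := by simp [hφ]
  have h1 : φ 1 = f z := by simp [hφ, hu]
  rw [slope_def_field] at hslope
  simp only [h0, h1] at hslope
  have hx0 : x + (0:ℝ) • u = x := by simp
  rw [hx0, show (1:ℝ) - 0 = 1 by norm_num, div_one] at hslope
  linarith


variable {d : ℕ} {p L : ℝ} {f : EuclideanSpace ℝ (Fin d) → ℝ} {x0 : EuclideanSpace ℝ (Fin d)}

lemma HASD.A_nonneg (h : HASD d p L f x0) : ∀ t, 0 ≤ h.A t := by
  intro t
  induction t with
  | zero => rw [h.A_zero]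
  | succ t ih => rw [h.A_succ]; have := h.a_pos t; linarith

lemma HASD.A_pos (h : HASD d p L f x0) (t : ℕ) : 0 < h.A (t + 1) := by
  rw [h.A_succ]; have := h.a_pos t; have := h.A_nonneg t; linarith

lemma HASD.psi_quad (h : HASD d p L f x0) (t : ℕ) :
    ∃ c : EuclideanSpace ℝ (Fin d), ∃ dd : ℝ, ∀ z,
      h.ψ t z = (1/2) * ‖z - x0‖^2 + ⟪c, z⟫_ℝ + dd := by
  induction t with
  | zero =>
    refine ⟨0, 0, fun z => ?_⟩
    rw [h.ψ_zero, pnorm_two_eq_norm]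
    simp
  | succ t ih =>
    obtain ⟨c, dd, hc⟩ := ih
    refine ⟨c + h.a (t+1) • gradient f (h.x (t+1)),
      dd + h.a (t+1) * (f (h.x (t+1)) - ⟪gradient f (h.x (t+1)), h.x (t+1)⟫_ℝ), fun z => ?_⟩
    rw [h.ψ_succ, hc, inner_add_left, inner_smul_left, inner_sub_right]
    simp only [conj_trivial]
    ring

lemma HASD.psi_strong (h : HASD d p L f x0) (t : ℕ) (z : EuclideanSpace ℝ (Fin d)) :
    h.ψ t (h.v t) + (1/2) * ‖z - h.v t‖^2 ≤ h.ψ t z := by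
  obtain ⟨c, dd, hc⟩ := h.psi_quad t
  set v := h.v t with hv
  have key : ∀ w, h.ψ t w - h.ψ t v = ⟪v - x0 + c, w - v⟫_ℝ + (1/2) * ‖w - v‖^2 := by
    intro w
    rw [hc, hc]
    have hns : ‖w - x0‖^2 = ‖w - v‖^2 + 2 * ⟪w - v, v - x0⟫_ℝ + ‖v - x0‖^2 := by
      have h4 : w - x0 = (w - v) + (v - x0) := by abel
      rw [h4, norm_add_sq_real]
    have hic : ⟪c, w⟫_ℝ - ⟪c, v⟫_ℝ = ⟪c, w - v⟫_ℝ := by rw [inner_sub_right]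
    have hcomm : ⟪w - v, v - x0⟫_ℝ = ⟪v - x0, w - v⟫_ℝ := real_inner_comm _ _
    rw [inner_add_left]
    linear_combination (1/2 : ℝ) * hns + hic + hcomm
  have hw0 : v - x0 + c = 0 := by
    by_contra hne
    have h1 := h.v_min t (v - (v - x0 + c))
    have h2 := key (v - (v - x0 + c))
    rw [show v - (v - x0 + c) - v = -(v - x0 + c) by abel] at h2
    rw [inner_neg_right, norm_neg] at h2
    rw [real_inner_self_eq_norm_sq] at h2
    have h3 : 0 < ‖v - x0 + c‖^2 := pow_pos (norm_pos_iff.mpr hne) 2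
    rw [← hv] at h1
    nlinarith
  have := key z
  rw [hw0] at this
  simp only [inner_zero_left] at this
  linarith

set_option maxHeartbeats 1000000 in
lemma HASD.step_key (h : HASD d p L f x0) (hp : 2 ≤ p) (hL : 0 < L)
    (hsmooth : ∀ x y : EuclideanSpace ℝ (Fin d),
      pnorm (dualExp p) (gradient f y - gradient f x) ≤ L * pnorm p (y - x)) (t : ℕ) :
    pnorm (dualExp p) (gradient f (h.x (t+1))) ^ 2 / (16 * L) ≤
      ⟪gradient f (h.x (t+1)), h.y t - h.x (t+1)⟫_ℝ := by
  have hq := dualExp_conj hp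
  have hq0 : (0:ℝ) < dualExp p := hq.symm.pos
  have hp0 : (0:ℝ) < p := hq.pos
  set g := gradient f (h.y t) with hgdef
  set G := gradient f (h.x (t+1)) with hGdef
  set u := h.x (t+1) - h.y t with hu
  set r := pnorm p u with hr
  have hrnn : 0 ≤ r := pnorm_nonneg p u
  -- basic bound from plugging z = y t
  have hbase : ⟪g, u⟫_ℝ + L * r^2 ≤ 0 := by
    have := h.x_min t (h.y t)
    rw [sub_self, pnorm_zero hp0] at this
    rw [inner_zero_right] at this; linarith
  -- g ≠ 0
  have hgne : g ≠ 0 := by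
    intro hg0
    have hr0 : r = 0 := by
      rw [hg0] at hbase
      simp only [inner_zero_left, zero_add] at hbase
      have h6 : r^2 ≤ 0 := by
        by_contra hcon
        push_neg at hcon
        have := mul_pos hL hcon
        linarith
      have h7 : r^2 = 0 := le_antisymm h6 (sq_nonneg r)
      exact pow_eq_zero_iff two_ne_zero |>.mp h7
    have hu0 : u = 0 := by
      by_contra hune
      exact absurd hr0 (ne_of_gt (pnorm_pos hp0 hune))
    have hxy : h.x (t+1) = h.y t := sub_eq_zero.mp (hu ▸ hu0)
    have hG0 : G = 0 := by rw [hGdef, hxy, ← hgdef]; exact hg0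
    exact h.grad_ne t hG0
  set Ng := pnorm (dualExp p) g with hNg
  have hNgpos : 0 < Ng := pnorm_pos hq0 hgne
  -- Hölder bounds
  have hold1 : ⟪g, -u⟫_ℝ ≤ Ng * r := by
    have := pnorm_holder hq.symm g (-u)
    rwa [pnorm_neg] at this
  -- F2 : L * r ≤ Ng
  have hF2 : L * r ≤ Ng := by
    rw [inner_neg_right] at hold1
    rcases eq_or_lt_of_le hrnn with hr0 | hrpos
    · rw [← hr0, mul_zero]; exact hNgpos.le
    · nlinarith
  -- F1 : step value bound
  have hF1 : ⟪g, u⟫_ℝ + L * r^2 ≤ -(Ng^2 / (4*L)) := by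
    obtain ⟨w, hw1, hw2⟩ := exists_norming hq hgne
    have hmin := h.x_min t (h.y t - (Ng/(2*L)) • w)
    have hz : h.y t - (Ng/(2*L)) • w - h.y t = -((Ng/(2*L)) • w) := by abel
    rw [hz, pnorm_neg, pnorm_smul hp0, hw1, inner_neg_right, inner_smul_right, hw2,
      abs_of_pos (by positivity : (0:ℝ) < Ng/(2*L))] at hmin
    calc ⟪g, u⟫_ℝ + L * r^2 ≤ -(Ng/(2*L) * Ng) + L * (Ng/(2*L) * 1)^2 := hmin
      _ = -(Ng^2/(4*L)) := by field_simp; ring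
  -- smoothness between y t and x (t+1)
  have hsm : pnorm (dualExp p) (G - g) ≤ L * r := by
    have := hsmooth (h.y t) (h.x (t+1))
    rwa [← hgdef, ← hGdef, ← hu, ← hr] at this
  -- F3 : pnorm q G ≤ 2 Ng
  set NG := pnorm (dualExp p) G with hNG
  have hF3 : NG ≤ 2 * Ng := by
    have htri : NG ≤ Ng + pnorm (dualExp p) (G - g) := by
      have := pnorm_triangle hq.symm.lt.le g (G - g)
      rw [show g + (G - g) = G by abel] at this
      rwa [← hNg, ← hNG] at this
    linarith
  -- F4
  have hholdGg : ⟪G - g, u⟫_ℝ ≤ L * r * r := by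
    have := pnorm_holder hq.symm (G - g) u
    nlinarith [pnorm_nonneg p u]
  have hyx : h.y t - h.x (t+1) = -u := by rw [hu]; abel
  have hinner : ⟪G, h.y t - h.x (t+1)⟫_ℝ = -⟪g, u⟫_ℝ - ⟪G - g, u⟫_ℝ := by
    rw [hyx, inner_neg_right]
    have hsubl : ⟪G - g, u⟫_ℝ = ⟪G, u⟫_ℝ - ⟪g, u⟫_ℝ := inner_sub_left _ _ _
    linear_combination hsubl
  have hF4 : Ng^2/(4*L) ≤ ⟪G, h.y t - h.x (t+1)⟫_ℝ := by
    rw [hinner]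
    nlinarith [hF1, hholdGg]
  have hNGnn : 0 ≤ NG := pnorm_nonneg _ G
  calc NG^2/(16*L) ≤ Ng^2/(4*L) := by
        rw [div_le_div_iff₀ (by positivity) (by positivity)]
        have hsq : NG * NG ≤ (2*Ng) * (2*Ng) :=
          mul_le_mul hF3 hF3 hNGnn (by linarith)
        nlinarith [mul_le_mul_of_nonneg_right hsq hL.le]
    _ ≤ _ := hF4

set_option maxHeartbeats 1000000 in
lemma HASD.invariant (h : HASD d p L f x0) (hp : 2 ≤ p) (hL : 0 < L)
    (hconv : ConvexOn ℝ Set.univ f) (hf : Differentiable ℝ f)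
    (hsmooth : ∀ x y : EuclideanSpace ℝ (Fin d),
      pnorm (dualExp p) (gradient f y - gradient f x) ≤ L * pnorm p (y - x)) :
    ∀ t, h.A t * f (h.x t) ≤ h.ψ t (h.v t) := by
  intro t
  induction t with
  | zero =>
    rw [h.A_zero, h.ψ_zero, zero_mul]
    positivity
  | succ t ih =>
    have hq := dualExp_conj hp
    set G := gradient f (h.x (t+1)) with hGdef
    set a := h.a (t+1) with ha
    set A := h.A t with hA
    set A' := h.A (t+1) with hA'
    set v := h.v t with hv
    set v' := h.v (t+1) with hv'
    have hapos : 0 < a := h.a_pos t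
    have hAnn : 0 ≤ A := h.A_nonneg t
    have hA'pos : 0 < A' := h.A_pos t
    have hAsucc : A' = A + a := h.A_succ t
    have hρpos := h.ρ_pos t
    have c1 : h.ψ (t+1) v' = h.ψ t v' + a * (f (h.x (t+1)) + (⟪G, v'⟫_ℝ - ⟪G, h.x (t+1)⟫_ℝ)) := by
      rw [h.ψ_succ t v', inner_sub_right]
    have c2 : h.ψ t v + (1/2) * ‖v' - v‖^2 ≤ h.ψ t v' := h.psi_strong t v'
    have c4 : f (h.x (t+1)) + (⟪G, h.x t⟫_ℝ - ⟪G, h.x (t+1)⟫_ℝ) ≤ f (h.x t) := by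
      have := convex_grad_ineq hconv hf (h.x (t+1)) (h.x t)
      rwa [inner_sub_right] at this
    have c4a : A * (f (h.x (t+1)) + (⟪G, h.x t⟫_ℝ - ⟪G, h.x (t+1)⟫_ℝ)) ≤ A * f (h.x t) :=
      mul_le_mul_of_nonneg_left c4 hAnn
    have h2 : A' * (a / A') = a := by field_simp
    have h1 : A' * (1 - a / A') = A := by rw [mul_sub, mul_one, h2]; linarith
    have hyv : A' • h.y t = A • h.x t + a • v := by
      rw [h.y_def t, smul_add, smul_smul, smul_smul, h1, h2]
    have c5 : A' * ⟪G, h.y t⟫_ℝ = A * ⟪G, h.x t⟫_ℝ + a * ⟪G, v⟫_ℝ := by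
      have hc := congrArg (fun z => ⟪G, z⟫_ℝ) hyv
      simp only [inner_add_right, real_inner_smul_right] at hc
      exact hc
    -- gradient positivity facts
    have hGne : G ≠ 0 := h.grad_ne t
    have hNGpos : 0 < pnorm (dualExp p) G := pnorm_pos hq.symm.pos hGne
    have hN2pos : 0 < ‖G‖ := norm_pos_iff.mpr hGne
    have hstep := h.step_key hp hL hsmooth t
    rw [← hGdef] at hstep
    have hρlb := h.ρ_lb t
    rw [← hGdef, pnorm_two_eq_norm] at hρlb
    have hfrac : ‖G‖^2 / (36*L*h.ρ t) ≤ pnorm (dualExp p) G^2/(16*L) := by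
      rw [div_le_div_iff₀ (by positivity) (by positivity)]
      have h3 : ‖G‖^2 ≤ 2 * h.ρ t * pnorm (dualExp p) G^2 := by
        have h5 := mul_le_mul_of_nonneg_right hρlb
          (by positivity : (0:ℝ) ≤ pnorm (dualExp p) G^2)
        have h6 : 1/2 * (‖G‖^2 / pnorm (dualExp p) G^2) * pnorm (dualExp p) G^2
            = 1/2 * ‖G‖^2 := by field_simp
        rw [h6] at h5
        nlinarith [h5]
      nlinarith [mul_le_mul_of_nonneg_right h3 hL.le]
    have c6' : ‖G‖^2/(36*L*h.ρ t) ≤ ⟪G, h.y t - h.x (t+1)⟫_ℝ := le_trans hfrac hstep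
    have ha2 : a^2 = A' / (18*L*h.ρ t) := by
      have := h.a_eq t
      rw [← ha, ← hA, ← hAsucc] at this
      exact this
    have c6'' : (a^2/2) * ‖G‖^2 ≤ A' * (⟪G, h.y t⟫_ℝ - ⟪G, h.x (t+1)⟫_ℝ) := by
      have hrw : (a^2/2) * ‖G‖^2 = A' * (‖G‖^2/(36*L*h.ρ t)) := by
        rw [ha2]; field_simp; ring
      rw [hrw]
      have := mul_le_mul_of_nonneg_left c6' hA'pos.le
      rwa [inner_sub_right] at this
    have c7 : -(a^2/2) * ‖G‖^2 ≤ a * (⟪G, v'⟫_ℝ - ⟪G, v⟫_ℝ) + (1/2) * ‖v' - v‖^2 := by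
      have hCS : |⟪G, v' - v⟫_ℝ| ≤ ‖G‖ * ‖v' - v‖ := abs_real_inner_le_norm _ _
      have hsub : ⟪G, v' - v⟫_ℝ = ⟪G, v'⟫_ℝ - ⟪G, v⟫_ℝ := inner_sub_right _ _ _
      have hlow : -(‖G‖ * ‖v' - v‖) ≤ ⟪G, v' - v⟫_ℝ := neg_le_of_abs_le hCS
      have hmul := mul_le_mul_of_nonneg_left hlow hapos.le
      rw [hsub] at hmul
      nlinarith [sq_nonneg (‖v' - v‖ - a * ‖G‖)]
    have hsplit1 : A' * ⟪G, h.x (t+1)⟫_ℝ = A * ⟪G, h.x (t+1)⟫_ℝ + a * ⟪G, h.x (t+1)⟫_ℝ := by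
      rw [hAsucc]; ring
    have hsplit2 : A' * f (h.x (t+1)) = A * f (h.x (t+1)) + a * f (h.x (t+1)) := by
      rw [hAsucc]; ring
    nlinarith [c1, c2, ih, c4a, c5, c6'', c7, hsplit1, hsplit2]

lemma HASD.upper (h : HASD d p L f x0)
    (hconv : ConvexOn ℝ Set.univ f) (hf : Differentiable ℝ f)
    (xstar : EuclideanSpace ℝ (Fin d)) :
    ∀ t, h.ψ t xstar ≤ h.A t * f xstar + (1/2) * ‖xstar - x0‖^2 := by
  intro t
  induction t with
  | zero =>
    rw [h.A_zero, h.ψ_zero, zero_mul, zero_add, pnorm_two_eq_norm]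
  | succ t ih =>
    rw [h.ψ_succ t xstar, h.A_succ t]
    have hcv := convex_grad_ineq hconv hf (h.x (t+1)) xstar
    have := mul_le_mul_of_nonneg_left hcv (h.a_pos t).le
    linarith

set_option maxHeartbeats 1000000 in
lemma HASD.sqrt_growth (h : HASD d p L f x0) (hp : 2 ≤ p) (hL : 0 < L) :
    ∀ t, (1/(12*Real.sqrt L)) * ∑ s ∈ Finset.range t,
      pnorm (dualExp p) (gradient f (h.x (s+1))) / pnorm 2 (gradient f (h.x (s+1)))
      ≤ Real.sqrt (h.A t) := by
  intro t
  induction t with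
  | zero => simp [h.A_zero]
  | succ t ih =>
    rw [Finset.sum_range_succ, mul_add]
    have hq := dualExp_conj hp
    set NG := pnorm (dualExp p) (gradient f (h.x (t+1))) with hNGd
    set N2 := pnorm 2 (gradient f (h.x (t+1))) with hN2d
    have hGne : gradient f (h.x (t+1)) ≠ 0 := h.grad_ne t
    have hNG : 0 < NG := pnorm_pos hq.symm.pos hGne
    have hN2 : 0 < N2 := pnorm_pos two_pos hGne
    have hρpos := h.ρ_pos t
    have hρub := h.ρ_ub t
    rw [← hNGd, ← hN2d] at hρub
    set a := h.a (t+1) with had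
    set A := h.A t with hAd
    set A' := h.A (t+1) with hA'd
    have hapos : 0 < a := h.a_pos t
    have hAnn : 0 ≤ A := h.A_nonneg t
    have hA'pos : 0 < A' := h.A_pos t
    have hAsucc : A' = A + a := h.A_succ t
    have ha2 : a^2 = A' / (18*L*h.ρ t) := by
      have h9 := h.a_eq t
      rw [← had, ← hAd] at h9
      rw [hAsucc]
      exact h9
    set s1 := Real.sqrt A with hs1d
    set s2 := Real.sqrt A' with hs2d
    have hs1 : s1^2 = A := Real.sq_sqrt hAnn
    have hs2 : s2^2 = A' := Real.sq_sqrt hA'pos.le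
    have hs2pos : 0 < s2 := Real.sqrt_pos.mpr hA'pos
    have hs1nn : 0 ≤ s1 := Real.sqrt_nonneg _
    have hs12 : s1 ≤ s2 := Real.sqrt_le_sqrt (by linarith)
    have hstep : a ≤ 2*s2*(s2 - s1) := by nlinarith [sq_nonneg (s2 - s1)]
    have hL' : 0 < Real.sqrt L := Real.sqrt_pos.mpr hL
    have hsqL : Real.sqrt L ^ 2 = L := Real.sq_sqrt hL.le
    have hc2 : ((1/(12*Real.sqrt L)) * (NG/N2))^2 ≤ (a/(2*s2))^2 := by
      have e1 : (a/(2*s2))^2 = 1/(72*L*h.ρ t) := by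
        rw [div_pow, ha2, ← hs2]
        field_simp
        ring
      have e2 : ((1/(12*Real.sqrt L)) * (NG/N2))^2 = NG^2/(144*L*N2^2) := by
        rw [mul_pow, div_pow, div_pow, one_pow, mul_pow, hsqL]
        ring
      rw [e1, e2, div_le_div_iff₀ (by positivity) (by positivity)]
      have h3 : h.ρ t * NG^2 ≤ 2*N2^2 := by
        have h4 := mul_le_mul_of_nonneg_right hρub (by positivity : (0:ℝ) ≤ NG^2)
        have h5 : 2*(N2^2/NG^2)*NG^2 = 2*N2^2 := by field_simp
        rw [h5] at h4
        exact h4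
      nlinarith [mul_le_mul_of_nonneg_left h3 hL.le]
    have hc : (1/(12*Real.sqrt L))*(NG/N2) ≤ a/(2*s2) := by
      have hcnn : (0:ℝ) ≤ (1/(12*Real.sqrt L))*(NG/N2) := by positivity
      have hann : (0:ℝ) < a/(2*s2) := by positivity
      have := Real.sqrt_le_sqrt hc2
      rwa [Real.sqrt_sq hcnn, Real.sqrt_sq hann.le] at this
    have hfin : a/(2*s2) ≤ s2 - s1 := by
      rw [div_le_iff₀ (by positivity)]
      nlinarith [hstep]
    calc (1/(12*Real.sqrt L)) * ∑ s ∈ Finset.range t,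
          pnorm (dualExp p) (gradient f (h.x (s+1))) / pnorm 2 (gradient f (h.x (s+1)))
          + (1/(12*Real.sqrt L)) * (NG/N2)
        ≤ s1 + (s2 - s1) := by
          apply add_le_add ih (le_trans hc hfin)
      _ = s2 := by ring


set_option maxHeartbeats 1000000 in
theorem stmt9 {d : ℕ} (p L : ℝ) (hp : 2 ≤ p) (hL : 0 < L)
    (f : EuclideanSpace ℝ (Fin d) → ℝ) (hconv : ConvexOn ℝ Set.univ f)
    (hf : Differentiable ℝ f)
    (hsmooth : ∀ x y : EuclideanSpace ℝ (Fin d),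
      pnorm (dualExp p) (gradient f y - gradient f x) ≤ L * pnorm p (y - x))
    (xstar : EuclideanSpace ℝ (Fin d)) (hxstar : ∀ z, f xstar ≤ f z)
    (x0 : EuclideanSpace ℝ (Fin d)) (h : HASD d p L f x0)
    (R : ℝ) (hR : pnorm 2 (x0 - xstar) ≤ R)
    (ε Ghat : ℝ) (hε : 0 < ε) (hGhat : 1 ≤ Ghat)
    (T : ℕ) (hT : T = ⌈18 * Real.sqrt 2 * L * R / (Ghat * ε)⌉₊)
    (hG : Ghat ≤ (1 / (T : ℝ)) * ∑ t ∈ Finset.range T,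
      pnorm (dualExp p) (gradient f (h.x (t + 1))) / pnorm 2 (gradient f (h.x (t + 1)))) :
    pnorm (dualExp p) (gradient f (h.x T)) ≤ ε := by
  have hq := dualExp_conj hp
  -- T ≥ 1
  rcases Nat.eq_zero_or_pos T with hT0 | hTpos
  · exfalso
    rw [hT0] at hG
    simp at hG
    linarith
  have hTR : (0:ℝ) < (T:ℝ) := by exact_mod_cast hTpos
  have hR0 : 0 ≤ R := le_trans (pnorm_nonneg _ _) hR
  have hGh0 : 0 < Ghat := by linarith
  -- sum of ratios ≥ T * Ghat
  have hsum : (T:ℝ) * Ghat ≤ ∑ t ∈ Finset.range T,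
      pnorm (dualExp p) (gradient f (h.x (t + 1))) / pnorm 2 (gradient f (h.x (t + 1))) := by
    have h1 := mul_le_mul_of_nonneg_left hG hTR.le
    rw [← mul_assoc, mul_one_div_cancel hTR.ne', one_mul] at h1
    exact h1
  -- lower bound on A T
  have hL' : 0 < Real.sqrt L := Real.sqrt_pos.mpr hL
  have hsqL : Real.sqrt L ^ 2 = L := Real.sq_sqrt hL.le
  have hgrow := h.sqrt_growth hp hL T
  have hsA : (1/(12*Real.sqrt L)) * ((T:ℝ) * Ghat) ≤ Real.sqrt (h.A T) := by
    calc (1/(12*Real.sqrt L)) * ((T:ℝ) * Ghat)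
        ≤ (1/(12*Real.sqrt L)) * ∑ t ∈ Finset.range T,
          pnorm (dualExp p) (gradient f (h.x (t + 1))) / pnorm 2 (gradient f (h.x (t + 1))) :=
          mul_le_mul_of_nonneg_left hsum (by positivity)
      _ ≤ _ := hgrow
  have hAT : (T:ℝ)^2*Ghat^2/(144*L) ≤ h.A T := by
    have h2 : ((1/(12*Real.sqrt L)) * ((T:ℝ) * Ghat))^2 ≤ Real.sqrt (h.A T)^2 := by
      have hnn : (0:ℝ) ≤ (1/(12*Real.sqrt L)) * ((T:ℝ) * Ghat) := by positivity
      exact pow_le_pow_left₀ hnn hsA 2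
    rw [Real.sq_sqrt (h.A_nonneg T)] at h2
    calc (T:ℝ)^2*Ghat^2/(144*L) = ((1/(12*Real.sqrt L)) * ((T:ℝ) * Ghat))^2 := by
          rw [mul_pow, div_pow, one_pow, mul_pow, mul_pow, hsqL]
          ring
      _ ≤ h.A T := h2
  have hATpos : 0 < h.A T := lt_of_lt_of_le (by positivity) hAT
  -- function value gap
  have hinv := h.invariant hp hL hconv hf hsmooth T
  have hup := h.upper hconv hf xstar T
  have hvx := h.v_min T xstar
  have hgap : h.A T * (f (h.x T) - f xstar) ≤ (1/2)*R^2 := by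
    have hnx : ‖xstar - x0‖ ≤ R := by
      rw [← pnorm_two_eq_norm]
      calc pnorm 2 (xstar - x0) = pnorm 2 (-(x0 - xstar)) := by
            congr 1
            abel
        _ = pnorm 2 (x0 - xstar) := pnorm_neg _
        _ ≤ R := hR
    have hnx2 : ‖xstar - x0‖^2 ≤ R^2 :=
      pow_le_pow_left₀ (norm_nonneg _) hnx 2
    nlinarith [hinv, hup, hvx, hnx2]
  -- final gradient bound
  obtain ⟨t0, ht0⟩ : ∃ t0, T = t0 + 1 := ⟨T - 1, (Nat.succ_pred_eq_of_pos hTpos).symm⟩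
  have hGTne : gradient f (h.x T) ≠ 0 := by rw [ht0]; exact h.grad_ne t0
  set N := pnorm (dualExp p) (gradient f (h.x T)) with hNd
  have hNpos : 0 < N := pnorm_pos hq.symm.pos hGTne
  have hfinal : N^2 ≤ 4*L*(f (h.x T) - f xstar) := by
    obtain ⟨w, hw1, hw2⟩ := exists_norming hq hGTne
    have hdesc := descent_lemma hp hL hf hsmooth (h.x T) (h.x T - (N/(2*L)) • w)
    have hz : h.x T - (N/(2*L)) • w - h.x T = -((N/(2*L)) • w) := by abel
    rw [hz, pnorm_neg, pnorm_smul hq.pos, hw1, inner_neg_right, real_inner_smul_right, hw2,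
      abs_of_pos (by positivity : (0:ℝ) < N/(2*L)), mul_one] at hdesc
    have hxs := hxstar (h.x T - (N/(2*L)) • w)
    have hcalc : f (h.x T) + -(N / (2 * L) * N) + L * (N/(2*L))^2 = f (h.x T) - N^2/(4*L) := by
      field_simp
      ring
    rw [hcalc] at hdesc
    have h7 : f xstar ≤ f (h.x T) - N^2/(4*L) := le_trans hxs hdesc
    have h8 : N^2/(4*L) ≤ f (h.x T) - f xstar := by linarith
    calc N^2 = 4*L*(N^2/(4*L)) := by field_simp
      _ ≤ 4*L*(f (h.x T) - f xstar) := mul_le_mul_of_nonneg_left h8 (by positivity)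
  -- combine
  have hNA : N^2 * h.A T ≤ 2*L*R^2 := by
    calc N^2 * h.A T ≤ (4*L*(f (h.x T) - f xstar)) * h.A T :=
          mul_le_mul_of_nonneg_right hfinal hATpos.le
      _ = 4*L*(h.A T * (f (h.x T) - f xstar)) := by ring
      _ ≤ 4*L*((1/2)*R^2) := mul_le_mul_of_nonneg_left hgap (by positivity)
      _ = 2*L*R^2 := by ring
  have hNB : N^2 * ((T:ℝ)^2*Ghat^2) ≤ 288*(L*R)^2 := by
    have h9 : N^2 * ((T:ℝ)^2*Ghat^2/(144*L)) ≤ N^2 * h.A T :=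
      mul_le_mul_of_nonneg_left hAT (by positivity)
    have h10 : N^2 * ((T:ℝ)^2*Ghat^2/(144*L)) * (144*L) = N^2 * ((T:ℝ)^2*Ghat^2) := by
      field_simp
    calc N^2 * ((T:ℝ)^2*Ghat^2) = N^2 * ((T:ℝ)^2*Ghat^2/(144*L)) * (144*L) := h10.symm
      _ ≤ (2*L*R^2) * (144*L) := by
          apply mul_le_mul_of_nonneg_right (le_trans h9 hNA) (by positivity)
      _ = 288*(L*R)^2 := by ring
  -- T lower bound
  have hceil : 18 * Real.sqrt 2 * L * R / (Ghat * ε) ≤ (T:ℝ) := by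
    rw [hT]
    exact Nat.le_ceil _
  have h648 : 648*(L*R)^2 ≤ ((T:ℝ)*Ghat*ε)^2 := by
    have h11 : 18 * Real.sqrt 2 * L * R ≤ (T:ℝ) * (Ghat * ε) := by
      rw [div_le_iff₀ (by positivity)] at hceil
      linarith
    have h12 : (0:ℝ) ≤ 18 * Real.sqrt 2 * L * R := by positivity
    have h13 := mul_self_le_mul_self h12 h11
    have hs2 : Real.sqrt 2 * Real.sqrt 2 = 2 := Real.mul_self_sqrt (by norm_num)
    nlinarith [h13, hs2]
  have hfin2 : N^2 * ((T:ℝ)^2*Ghat^2) ≤ (4/9)*ε^2 * ((T:ℝ)^2*Ghat^2) := by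
    calc N^2 * ((T:ℝ)^2*Ghat^2) ≤ 288*(L*R)^2 := hNB
      _ ≤ (4/9)*((T:ℝ)*Ghat*ε)^2 := by linarith [h648]
      _ = (4/9)*ε^2 * ((T:ℝ)^2*Ghat^2) := by ring
  have hfin3 : N^2 ≤ (4/9)*ε^2 :=
    le_of_mul_le_mul_right (by linarith [hfin2]) (by positivity : (0:ℝ) < (T:ℝ)^2*Ghat^2)
  nlinarith [hfin3, hNpos.le, hε.le, sq_nonneg (N - ε), sq_nonneg (N + ε)]
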